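/- Fix c > 0. There exist constants C > 0 and A > 0 (depending only on c) such that for every integer n ≥ 2, ∫_{[0,1]^n} exp(−c / M(u)²) du ≥ C · exp(−A (n−1)²), where M(u) := min_{1≤i<j≤n} |u_i − u_j| is the minimal gap of the coordinates of u. Equivalently, for n independent uniforms on [0,1] with minimal gap M, E[exp(−c M^{−2})] ≥ C e^{−A(n−1)²}. -/

import Mathlib

open MeasureTheory

/-- Fix `c > 0`. There are constants `C, A > 0` such that for every `n ≥ 2`,
`∫_{[0,1]^n} exp(−c/M(u)²) du ≥ C exp(−A(n−1)²)`, where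
`M(u) = min_{i≠j} |u_i − u_j|` is the minimal gap (interpreting the integrand
as `0` when `M(u) = 0`). -/
theorem expected_exp_inverse_square_gap_lower_bound
    (c : ℝ) (hc : 0 < c) :
    ∃ C : ℝ, 0 < C ∧ ∃ A : ℝ, 0 < A ∧ ∀ n : ℕ, 2 ≤ n →
      ∀ M : (Fin n → ℝ) → ℝ,
        (M = fun u => ⨅ p : {p : Fin n × Fin n // p.1 ≠ p.2}, |u p.1.1 - u p.1.2|) →
        C * Real.exp (-A * ((n : ℝ) - 1) ^ 2)
          ≤ ∫ u in Set.Icc (0 : Fin n → ℝ) 1,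
              (if M u = 0 then 0 else Real.exp (-c / (M u) ^ 2)) := by
  refine ⟨1, one_pos, 16 * c + 8, by positivity, ?_⟩
  intro n hn M hM
  have hnR : (2 : ℝ) ≤ (n : ℝ) := by exact_mod_cast hn
  set nR : ℝ := (n : ℝ) with hnRdef
  have hn0 : (0 : ℝ) < nR := by linarith
  have hn2 : (0 : ℝ) < 2 * nR := by linarith
  haveI hne : Nonempty {p : Fin n × Fin n // p.1 ≠ p.2} := by
    refine ⟨⟨(⟨0, by omega⟩, ⟨1, by omega⟩), ?_⟩⟩
    simp [Fin.ext_iff]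
  -- continuity of M
  have hMc : Continuous M := by
    rw [hM]
    have : (fun u : Fin n → ℝ =>
        ⨅ p : {p : Fin n × Fin n // p.1 ≠ p.2}, |u p.1.1 - u p.1.2|)
        = fun u => Finset.univ.inf' Finset.univ_nonempty
            (fun p : {p : Fin n × Fin n // p.1 ≠ p.2} => |u p.1.1 - u p.1.2|) := by
      funext u; rw [Finset.inf'_univ_eq_ciInf]
    rw [this]
    exact Continuous.finset_inf'_apply _
      fun p _ => ((continuous_apply p.1.1).sub (continuous_apply p.1.2)).abs
  set f : (Fin n → ℝ) → ℝ := fun u => if M u = 0 then 0 else Real.exp (-c / (M u) ^ 2)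
    with hf
  have hf_nonneg : ∀ u, 0 ≤ f u := by
    intro u; rw [hf]; dsimp only
    split_ifs
    · exact le_refl 0
    · exact (Real.exp_pos _).le
  have hf_le_one : ∀ u, ‖f u‖ ≤ 1 := by
    intro u; rw [hf]; dsimp only
    split_ifs with h
    · simp
    · rw [Real.norm_eq_abs, abs_of_pos (Real.exp_pos _)]
      apply Real.exp_le_one_iff.mpr
      apply div_nonpos_of_nonpos_of_nonneg (by linarith) (sq_nonneg _) |>.trans_eq rfl
  have hf_meas : Measurable f := by
    apply Measurable.ite (hMc.measurable (measurableSet_singleton 0)) measurable_const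
    exact (Real.measurable_exp.comp ((measurable_const.div
      ((hMc.measurable.pow measurable_const)))))
  -- the box
  set a : Fin n → ℝ := fun i => (i : ℝ) / nR with ha
  set b : Fin n → ℝ := fun i => (i : ℝ) / nR + 1 / (2 * nR) with hb
  have hab : a ≤ b := fun i => by
    rw [ha, hb]; dsimp only; nlinarith [one_div_pos.mpr hn2]
  set S : Set (Fin n → ℝ) := Set.Icc a b with hS
  have hsub : S ⊆ Set.Icc (0 : Fin n → ℝ) 1 := by
    intro u hu
    constructor
    · intro i
      have h1 : a i ≤ u i := hu.1 i
      rw [ha] at h1; dsimp only at h1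
      have : (0:ℝ) ≤ (i:ℝ) / nR := by positivity
      exact le_trans this h1
    · intro i
      have h2 : u i ≤ b i := hu.2 i
      rw [hb] at h2; dsimp only at h2
      have hi : ((i : ℕ) : ℝ) ≤ nR - 1 := by
        have h5 : (i : ℕ) + 1 ≤ n := i.isLt
        have h6 : ((i : ℕ) : ℝ) + 1 ≤ (n : ℝ) := by exact_mod_cast h5
        rw [hnRdef]; linarith
      have h3 : (i : ℝ) / nR + 1 / (2 * nR) ≤ 1 := by
        rw [div_add_div _ _ (ne_of_gt hn0) (ne_of_gt hn2), div_le_one (by positivity)]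
        ring_nf; nlinarith
      exact (h2.trans h3 : u i ≤ (1:ℝ))
  -- lower bound for M on S
  have hMlow : ∀ u ∈ S, 1 / (2 * nR) ≤ M u := by
    intro u hu
    rw [hM]
    apply le_ciInf
    rintro ⟨⟨i, j⟩, hij⟩
    dsimp only
    have hijn : (i : ℕ) ≠ (j : ℕ) := fun h => hij (Fin.ext h)
    have hui : a i ≤ u i ∧ u i ≤ b i := ⟨hu.1 i, hu.2 i⟩
    have huj : a j ≤ u j ∧ u j ≤ b j := ⟨hu.1 j, hu.2 j⟩
    rw [ha, hb] at hui huj; dsimp only at hui huj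
    rcases lt_or_gt_of_ne hijn with h | h
    · -- i < j : u j - u i ≥ 1/(2n)
      have h1 : ((i : ℕ) : ℝ) + 1 ≤ ((j : ℕ) : ℝ) := by exact_mod_cast h
      have h4 : ((i : ℝ) + 1) / nR ≤ (j : ℝ) / nR := by gcongr
      have h2 : (1:ℝ) / (2 * nR) + 1 / (2 * nR) = 1 / nR := by
        rw [← add_div, div_eq_div_iff hn2.ne' hn0.ne']; ring
      have h3 : (i : ℝ) / nR + 1 / nR = ((i : ℝ) + 1) / nR := by rw [← add_div]
      have : 1 / (2 * nR) ≤ u j - u i := by linarith [hui.2, huj.1]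
      calc 1 / (2 * nR) ≤ u j - u i := this
        _ ≤ |u i - u j| := by rw [abs_sub_comm]; exact le_abs_self _
    · have h1 : ((j : ℕ) : ℝ) + 1 ≤ ((i : ℕ) : ℝ) := by exact_mod_cast h
      have h4 : ((j : ℝ) + 1) / nR ≤ (i : ℝ) / nR := by gcongr
      have h2 : (1:ℝ) / (2 * nR) + 1 / (2 * nR) = 1 / nR := by
        rw [← add_div, div_eq_div_iff hn2.ne' hn0.ne']; ring
      have h3 : (j : ℝ) / nR + 1 / nR = ((j : ℝ) + 1) / nR := by rw [← add_div]
      have : 1 / (2 * nR) ≤ u i - u j := by linarith [huj.2, hui.1]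
      exact this.trans (le_abs_self _)
  -- pointwise lower bound for f on S
  have hflow : ∀ u ∈ S, Real.exp (-(4 * c) * nR ^ 2) ≤ f u := by
    intro u hu
    have hM1 : 1 / (2 * nR) ≤ M u := hMlow u hu
    have hMpos : 0 < M u := lt_of_lt_of_le (by positivity) hM1
    rw [hf]; dsimp only
    rw [if_neg (ne_of_gt hMpos)]
    apply Real.exp_le_exp.mpr
    have hsq : (1 / (2 * nR)) ^ 2 ≤ (M u) ^ 2 := by
      apply pow_le_pow_left₀ (by positivity) hM1 2
    have h5 : c / (M u) ^ 2 ≤ c / (1 / (2 * nR)) ^ 2 := by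
      apply div_le_div_of_nonneg_left hc.le (by positivity) hsq
    have h6 : c / (1 / (2 * nR)) ^ 2 = 4 * c * nR ^ 2 := by
      field_simp; ring
    rw [neg_div] at *
    linarith [h5.trans_eq h6]
  -- integrability
  have hfin : volume (Set.Icc (0 : Fin n → ℝ) 1) ≠ ⊤ :=
    (isCompact_Icc.measure_lt_top).ne
  have hfi : IntegrableOn f (Set.Icc (0 : Fin n → ℝ) 1) volume :=
    Measure.integrableOn_of_bounded hfin hf_meas.aestronglyMeasurable
      (ae_of_all _ hf_le_one)
  have hSfin : volume S < ⊤ := lt_of_le_of_lt (measure_mono hsub) hfin.lt_top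
  -- chain of inequalities
  have step1 : ∫ u in S, f u ≤ ∫ u in Set.Icc (0 : Fin n → ℝ) 1, f u :=
    setIntegral_mono_set hfi (ae_of_all _ hf_nonneg) (HasSubset.Subset.eventuallyLE hsub)
  have step2 : ∫ _ in S, Real.exp (-(4 * c) * nR ^ 2) ≤ ∫ u in S, f u := by
    apply setIntegral_mono_on (integrableOn_const hSfin.ne)
      (hfi.mono_set hsub) measurableSet_Icc
    exact hflow
  have hvol : (volume S).toReal = (1 / (2 * nR)) ^ n := by
    rw [hS, Real.volume_Icc_pi_toReal hab]
    rw [ha, hb]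
    simp only [add_sub_cancel_left]
    rw [Finset.prod_const, Finset.card_univ, Fintype.card_fin]
  have step3 : ∫ _ in S, Real.exp (-(4 * c) * nR ^ 2)
      = (1 / (2 * nR)) ^ n * Real.exp (-(4 * c) * nR ^ 2) := by
    rw [setIntegral_const, measureReal_def, hvol, smul_eq_mul]
  -- final numeric inequality
  have hpow : (1 / (2 * nR)) ^ n = Real.exp ((n : ℝ) * Real.log (1 / (2 * nR))) := by
    rw [Real.exp_nat_mul, Real.exp_log (by positivity)]
  have hfinal : 1 * Real.exp (-(16 * c + 8) * (nR - 1) ^ 2)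
      ≤ (1 / (2 * nR)) ^ n * Real.exp (-(4 * c) * nR ^ 2) := by
    rw [one_mul, hpow, ← Real.exp_add]
    apply Real.exp_le_exp.mpr
    rw [one_div, Real.log_inv]
    have hlog : Real.log (2 * nR) ≤ 2 * nR - 1 := Real.log_le_sub_one_of_pos hn2
    have hlog2 : nR * Real.log (2 * nR) ≤ 2 * nR ^ 2 := by nlinarith
    have hsq : nR ^ 2 ≤ 4 * (nR - 1) ^ 2 := by nlinarith
    nlinarith [mul_le_mul_of_nonneg_left hsq hc.le]
  calc 1 * Real.exp (-(16 * c + 8) * (nR - 1) ^ 2)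
      ≤ (1 / (2 * nR)) ^ n * Real.exp (-(4 * c) * nR ^ 2) := hfinal
    _ = ∫ _ in S, Real.exp (-(4 * c) * nR ^ 2) := step3.symm
    _ ≤ ∫ u in S, f u := step2
    _ ≤ ∫ u in Set.Icc (0 : Fin n → ℝ) 1, f u := step1
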